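/- Let m be a real random variable with law N(0, σ_m²) where σ_m² > 0, on a probability space (Ω, ℱ, ℙ). For a measurable encoder γ : ℝ → ℝ let u_γ = 𝔼[m | σ(γ(m))] and J(γ) = 𝔼[(a·m − b − u_γ)²]. If a = 1/2, then J(γ) = (1/4)·σ_m² + b² for every measurable γ : ℝ → ℝ; that is, the encoder's cost is independent of the encoding policy and every policy is a Stackelberg equilibrium. -/

import Mathlib

open MeasureTheory ProbabilityTheory NNReal

open scoped ENNReal

section AuxGaussian

open Real

lemma aux_int_sq_exp {b : ℝ} (hb : 0 < b) :
    Integrable (fun x : ℝ => x ^ 2 * Real.exp (-b * x ^ 2)) := by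
  have := integrable_rpow_mul_exp_neg_mul_sq hb (s := 2) (by norm_num)
  simp_rw [show (2:ℝ) = ((2:ℕ):ℝ) by norm_num, Real.rpow_natCast] at this
  exact this

lemma aux_integral_self_exp {b : ℝ} (hb : 0 < b) :
    ∫ x : ℝ, x * Real.exp (-b * x ^ 2) = 0 := by
  have hb' : b ≠ 0 := ne_of_gt hb
  have hderiv : ∀ x : ℝ, HasDerivAt (fun x : ℝ => -(2 * b)⁻¹ * Real.exp (-b * x ^ 2))
      (x * Real.exp (-b * x ^ 2)) x := by
    intro x
    refine (((hasDerivAt_pow 2 x : HasDerivAt (fun x : ℝ => x ^ 2) _ x).const_mul (-b)).exp.const_mul (-(2 * b)⁻¹)).congr_deriv ?_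
    field_simp
    ring
  exact integral_eq_zero_of_hasDerivAt_of_integrable hderiv
    (integrable_mul_exp_neg_mul_sq hb) ((integrable_exp_neg_mul_sq hb).const_mul _)

lemma aux_integral_sq_exp {b : ℝ} (hb : 0 < b) :
    ∫ x : ℝ, x ^ 2 * Real.exp (-b * x ^ 2) = (2 * b)⁻¹ * Real.sqrt (π / b) := by
  have hb' : b ≠ 0 := ne_of_gt hb
  have hderiv : ∀ x : ℝ, HasDerivAt (fun x : ℝ => -(2 * b)⁻¹ * (x * Real.exp (-b * x ^ 2)))
      (x ^ 2 * Real.exp (-b * x ^ 2) - (2 * b)⁻¹ * Real.exp (-b * x ^ 2)) x := by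
    intro x
    have h1 : HasDerivAt (fun x : ℝ => x * Real.exp (-b * x ^ 2))
        (Real.exp (-b * x ^ 2) + x * (Real.exp (-b * x ^ 2) * (-b * (2 * x)))) x := by
      have : HasDerivAt (fun x : ℝ => x * Real.exp (-b * x ^ 2)) _ x :=
        (hasDerivAt_id' x).mul (((hasDerivAt_pow 2 x).const_mul (-b)).exp)
      simpa using this
    refine (h1.const_mul (-(2 * b)⁻¹)).congr_deriv ?_
    field_simp
    ring
  have h0 := integral_eq_zero_of_hasDerivAt_of_integrable hderiv
    ((aux_int_sq_exp hb).sub ((integrable_exp_neg_mul_sq hb).const_mul _))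
    ((integrable_mul_exp_neg_mul_sq hb).const_mul _)
  rw [integral_sub (aux_int_sq_exp hb) ((integrable_exp_neg_mul_sq hb).const_mul _),
    sub_eq_zero] at h0
  rw [h0, MeasureTheory.integral_const_mul, integral_gaussian]

lemma aux_pdf_eq (v : ℝ≥0) (x : ℝ) :
    gaussianPDFReal 0 v x
      = (Real.sqrt (2 * π * v))⁻¹ * Real.exp (-(2 * (v : ℝ))⁻¹ * x ^ 2) := by
  rw [gaussianPDFReal]
  congr 2
  rw [sub_zero, div_eq_mul_inv]
  ring

lemma aux_integral_gaussianReal (v : ℝ≥0) (hv : v ≠ 0) (g : ℝ → ℝ) :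
    ∫ x, g x ∂(gaussianReal 0 v) = ∫ x, gaussianPDFReal 0 v x * g x := by
  have hpdf : gaussianPDF 0 v = fun x => ((Real.toNNReal (gaussianPDFReal 0 v x)) : ℝ≥0∞) := rfl
  rw [gaussianReal_of_var_ne_zero _ hv, hpdf,
    integral_withDensity_eq_integral_smul (measurable_gaussianPDFReal 0 v).real_toNNReal g]
  congr 1
  ext x
  rw [NNReal.smul_def, smul_eq_mul, Real.coe_toNNReal _ (gaussianPDFReal_nonneg 0 v x)]

lemma aux_integrable_gaussianReal (v : ℝ≥0) (hv : v ≠ 0) (g : ℝ → ℝ)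
    (h : Integrable (fun x => gaussianPDFReal 0 v x * g x)) :
    Integrable g (gaussianReal 0 v) := by
  have hpdf : gaussianPDF 0 v = fun x => ((Real.toNNReal (gaussianPDFReal 0 v x)) : ℝ≥0∞) := rfl
  rw [gaussianReal_of_var_ne_zero _ hv, hpdf,
    integrable_withDensity_iff_integrable_smul (measurable_gaussianPDFReal 0 v).real_toNNReal]
  refine h.congr (ae_of_all _ fun x => ?_)
  simp only [NNReal.smul_def, smul_eq_mul, Real.coe_toNNReal _ (gaussianPDFReal_nonneg 0 v x)]

variable (v : ℝ≥0) (hv : v ≠ 0)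

include hv

lemma aux_hb : 0 < (2 * (v : ℝ))⁻¹ := by
  have : 0 < (v : ℝ) := lt_of_le_of_ne (v.coe_nonneg) (by exact_mod_cast (Ne.symm hv))
  positivity

lemma aux_integrable_sq : Integrable (fun x : ℝ => x ^ 2) (gaussianReal 0 v) := by
  refine aux_integrable_gaussianReal v hv _ ?_
  have h := (aux_int_sq_exp (aux_hb v hv)).const_mul (Real.sqrt (2 * π * v))⁻¹
  refine h.congr (ae_of_all _ fun x => ?_)
  simp only [aux_pdf_eq]
  ring

lemma aux_integral_id : ∫ x, x ∂(gaussianReal 0 v) = 0 := by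
  rw [aux_integral_gaussianReal v hv]
  have : ∀ x : ℝ, gaussianPDFReal 0 v x * x
      = (Real.sqrt (2 * π * v))⁻¹ * (x * Real.exp (-(2 * (v : ℝ))⁻¹ * x ^ 2)) := by
    intro x; rw [aux_pdf_eq]; ring
  simp_rw [this]
  rw [MeasureTheory.integral_const_mul, aux_integral_self_exp (aux_hb v hv), mul_zero]

lemma aux_integral_sq : ∫ x, x ^ 2 ∂(gaussianReal 0 v) = (v : ℝ) := by
  rw [aux_integral_gaussianReal v hv]
  have : ∀ x : ℝ, gaussianPDFReal 0 v x * x ^ 2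
      = (Real.sqrt (2 * π * v))⁻¹ * (x ^ 2 * Real.exp (-(2 * (v : ℝ))⁻¹ * x ^ 2)) := by
    intro x; rw [aux_pdf_eq]; ring
  simp_rw [this]
  rw [MeasureTheory.integral_const_mul, aux_integral_sq_exp (aux_hb v hv)]
  have hvpos : 0 < (v : ℝ) := lt_of_le_of_ne (v.coe_nonneg) (by exact_mod_cast (Ne.symm hv))
  have h1 : (2 * (2 * (v : ℝ))⁻¹)⁻¹ = (v : ℝ) := by field_simp
  have h2 : π / (2 * (v : ℝ))⁻¹ = 2 * π * v := by field_simp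
  rw [h1, h2]
  have h3 : 0 < Real.sqrt (2 * π * v) := Real.sqrt_pos.2 (by positivity)
  field_simp

lemma aux_memLp2_id : MemLp (fun x : ℝ => x) 2 (gaussianReal 0 v) := by
  have hsm : AEStronglyMeasurable (fun x : ℝ => x) (gaussianReal 0 v) :=
    aestronglyMeasurable_id
  rw [memLp_two_iff_integrable_sq hsm]
  exact aux_integrable_sq v hv

end AuxGaussian

section AuxCondexp

lemma aux_integrable_mul_L2 {α : Type*} {m0 : MeasurableSpace α} {μ : Measure α}
    {f g : α → ℝ} (hf : MemLp f 2 μ) (hg : MemLp g 2 μ) :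
    Integrable (fun x => f x * g x) μ := by
  have hb : ∀ x, ‖f x * g x‖ ≤ (1 / 2) * (f x ^ 2 + g x ^ 2) := by
    intro x
    rw [Real.norm_eq_abs, abs_mul]
    nlinarith [sq_nonneg (|f x| - |g x|), sq_abs (f x), sq_abs (g x), abs_nonneg (f x),
      abs_nonneg (g x)]
  exact Integrable.mono' ((hf.integrable_sq.add hg.integrable_sq).const_mul (1 / 2))
    (hf.aestronglyMeasurable.mul hg.aestronglyMeasurable) (ae_of_all _ hb)

lemma aux_memLp2_condexp {α : Type*} {m m0 : MeasurableSpace α} {μ : Measure α}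
    [IsProbabilityMeasure μ] (hm : m ≤ m0) {f : α → ℝ} (hf : MemLp f 2 μ) :
    MemLp (μ[f|m]) 2 μ := by
  haveI : SigmaFinite (μ.trim hm) := by
    have : IsFiniteMeasure (μ.trim hm) := isFiniteMeasure_trim hm
    infer_instance
  have hfint : Integrable f μ := hf.integrable one_le_two
  set fL2 : Lp ℝ 2 μ := hf.toLp f with hfL2
  have heq : ((condExpL2 ℝ ℝ hm fL2 : Lp ℝ 2 μ) : α → ℝ) =ᵐ[μ] μ[f|m] := by
    refine ae_eq_condExp_of_forall_setIntegral_eq hm hfint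
      (fun s hs hμs => integrableOn_condExpL2_of_measure_ne_top hm hμs.ne _)
      (fun s hs hμs => ?_) (aestronglyMeasurable_condExpL2 hm _)
    rw [integral_condExpL2_eq hm fL2 hs hμs.ne]
    exact setIntegral_congr_ae (hm s hs) ((hf.coeFn_toLp).mono fun x hx _ => hx)
  exact (Lp.memLp ((condExpL2 ℝ ℝ hm fL2 : Lp ℝ 2 μ))).ae_eq heq

end AuxCondexp

/-- Scalar noiseless cheap talk with Gaussian source, case `a = 1/2`: the encoder's
cost equals `(1/4)·σ_m² + b²` for every measurable policy `γ`, so every policy is a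
Stackelberg equilibrium. -/
theorem stmt_4 {Ω : Type*} {F : MeasurableSpace Ω} {μ : Measure Ω} [IsProbabilityMeasure μ]
    (m : Ω → ℝ) (hm : Measurable m) (v : ℝ≥0) (hv : 0 < v)
    (hmap : μ.map m = gaussianReal 0 v) (a b : ℝ) (ha : a = 1 / 2) :
    ∀ γ : ℝ → ℝ, Measurable γ →
      ∫ ω, (a * m ω - b -
          (μ[m | MeasurableSpace.comap (fun ω => γ (m ω)) inferInstance]) ω) ^ 2 ∂μ
        = (1 / 4) * (v : ℝ) + b ^ 2 := by
  subst ha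
  intro γ hγ
  have hv' : v ≠ 0 := hv.ne'
  -- moments of m
  have hm2 : MemLp m 2 μ := by
    have h : MemLp (fun x : ℝ => x) 2 (μ.map m) := by rw [hmap]; exact aux_memLp2_id v hv'
    have := (memLp_map_measure_iff aestronglyMeasurable_id hm.aemeasurable).mp h
    simpa [Function.comp] using this
  have hmi : Integrable m μ := hm2.integrable one_le_two
  have hEm : ∫ ω, m ω ∂μ = 0 := by
    have hi := integral_map (μ := μ) (φ := m) (f := fun x : ℝ => x) hm.aemeasurable
      aestronglyMeasurable_id
    rw [hmap, aux_integral_id v hv'] at hi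
    exact hi.symm
  have hEm2 : ∫ ω, m ω ^ 2 ∂μ = (v : ℝ) := by
    have hi := integral_map (μ := μ) (φ := m) (f := fun x : ℝ => x ^ 2) hm.aemeasurable
      (measurable_id.pow_const 2).aestronglyMeasurable
    rw [hmap, aux_integral_sq v hv'] at hi
    exact hi.symm
  set G := MeasurableSpace.comap (fun ω => γ (m ω)) inferInstance with hGdef
  have hG : G ≤ F := (hγ.comp hm).comap_le
  haveI : SigmaFinite (μ.trim hG) := by
    have : IsFiniteMeasure (μ.trim hG) := isFiniteMeasure_trim hG
    infer_instance
  set u := μ[m|G] with hu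
  -- conditional expectation facts
  have hu2 : MemLp u 2 μ := aux_memLp2_condexp hG hm2
  have hui : Integrable u μ := integrable_condExp
  have hEu : ∫ ω, u ω ∂μ = 0 := (integral_condExp hG (f := m)).trans hEm
  have hum : Integrable (u * m) μ := aux_integrable_mul_L2 hu2 hm2
  have huu : Integrable (fun ω => u ω * u ω) μ := aux_integrable_mul_L2 hu2 hu2
  have hmu : Integrable (fun ω => m ω * u ω) μ := aux_integrable_mul_L2 hm2 hu2
  have hpull : μ[u * m|G] =ᵐ[μ] u * μ[m|G] :=
    condExp_mul_of_stronglyMeasurable_left stronglyMeasurable_condExp hum hmi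
  have h1 : ∫ ω, m ω * u ω ∂μ = ∫ ω, u ω * u ω ∂μ := by
    calc ∫ ω, m ω * u ω ∂μ = ∫ ω, (u * m) ω ∂μ := by
          simp only [Pi.mul_apply]; congr 1; ext ω; ring
      _ = ∫ ω, (μ[u * m|G]) ω ∂μ := (integral_condExp hG (f := u * m)).symm
      _ = ∫ ω, (u * μ[m|G]) ω ∂μ := integral_congr_ae hpull
      _ = ∫ ω, u ω * u ω ∂μ := by simp only [Pi.mul_apply, ← hu]
  -- integrability of the pieces
  have i1 : Integrable (fun ω => (1 / 4 : ℝ) * m ω ^ 2) μ := hm2.integrable_sq.const_mul _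
  have i2 : Integrable (fun ω => u ω * u ω - m ω * u ω) μ := huu.sub hmu
  have i3 : Integrable (fun ω => b * (2 * u ω - m ω)) μ :=
    ((hui.const_mul 2).sub hmi).const_mul b
  have v1 : ∫ ω, (1 / 4 : ℝ) * m ω ^ 2 ∂μ = (1 / 4) * (v : ℝ) := by
    rw [MeasureTheory.integral_const_mul, hEm2]
  have v2 : ∫ ω, (u ω * u ω - m ω * u ω) ∂μ = 0 := by
    rw [integral_sub huu hmu, h1, sub_self]
  have v3 : ∫ ω, b * (2 * u ω - m ω) ∂μ = 0 := by
    rw [MeasureTheory.integral_const_mul, integral_sub (hui.const_mul 2) hmi,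
      MeasureTheory.integral_const_mul, hEu, hEm]
    ring
  calc ∫ ω, (1 / 2 * m ω - b - u ω) ^ 2 ∂μ
      = ∫ ω, ((1 / 4 : ℝ) * m ω ^ 2 + (u ω * u ω - m ω * u ω)
          + b * (2 * u ω - m ω) + b ^ 2) ∂μ := by
        apply integral_congr_ae
        filter_upwards with ω
        ring
    _ = (1 / 4) * (v : ℝ) + b ^ 2 := by
        have i12 : Integrable (fun ω => (1 / 4 : ℝ) * m ω ^ 2
            + (u ω * u ω - m ω * u ω)) μ := i1.add i2
        have i123 : Integrable (fun ω => (1 / 4 : ℝ) * m ω ^ 2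
            + (u ω * u ω - m ω * u ω) + b * (2 * u ω - m ω)) μ := i12.add i3
        rw [integral_add i123 (integrable_const _),
          integral_add i12 i3, integral_add i1 i2, v1, v2, v3, integral_const]
        simp
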